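/- Let n ≥ 2 and let p < q be Farey neighbours in F_{n-1} such that p.den + q.den = n. Then the mediant m = (p.num + q.num)/(p.den + q.den) is in lowest terms, m belongs to F_n, p < m < q, and p, m as well as m, q are Farey neighbours in F_n. -/

import Mathlib

private lemma rat_lt_iff' (r s : ℚ) : r < s ↔ r.num * (s.den : ℤ) < s.num * (r.den : ℤ) := by
  conv_lhs => rw [← Rat.num_div_den r, ← Rat.num_div_den s]
  rw [div_lt_div_iff₀ (by exact_mod_cast r.den_pos) (by exact_mod_cast s.den_pos)]
  exact_mod_cast Iff.rfl

/-- Farey neighbours in `F_m` (with `p.den + q.den = m + 1`) satisfy the determinant identity. -/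
private lemma farey_det (n : ℕ) (hn : 2 ≤ n) (G : Finset ℚ)
    (hG : ∀ q : ℚ, q ∈ G ↔ 0 ≤ q ∧ q ≤ 1 ∧ q.den ≤ n - 1)
    (p q : ℚ) (hp : p ∈ G) (hq : q ∈ G) (hpq : p < q)
    (hneigh : ∀ r ∈ G, ¬(p < r ∧ r < q))
    (hden : p.den + q.den = n) :
    q.num * (p.den : ℤ) - p.num * (q.den : ℤ) = 1 := by
  obtain ⟨hp0, hp1, hpd⟩ := (hG p).mp hp
  obtain ⟨hq0, hq1, hqd⟩ := (hG q).mp hq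
  set a := p.num with ha
  set c := q.num with hc
  set b := (p.den : ℤ) with hb'
  set d := (q.den : ℤ) with hd'
  have hb : 0 < b := by rw [hb']; exact_mod_cast p.den_pos
  have hd : 0 < d := by rw [hd']; exact_mod_cast q.den_pos
  set m : ℕ := n - 1 with hm
  have hbm : b ≤ (m : ℤ) := by rw [hb']; exact_mod_cast hpd
  have hdm : d ≤ (m : ℤ) := by rw [hd']; exact_mod_cast hqd
  have hbd : b + d = (m : ℤ) + 1 := by
    rw [hb', hd']
    have h1 : p.den + q.den = m + 1 := by omega
    exact_mod_cast h1
  -- coprimality of a and b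
  have hco : IsCoprime a b := by
    rw [Int.isCoprime_iff_gcd_eq_one]
    rw [hb', ha]; exact p.reduced
  obtain ⟨u, v, huv⟩ := hco
  -- build X, Y with b*Y - a*X = 1 and m - b < X ≤ m
  set s : ℤ := ((m : ℤ) + u) % b with hs
  have hs0 : 0 ≤ s := Int.emod_nonneg _ hb.ne'
  have hsb : s < b := Int.emod_lt_of_pos _ hb
  set X : ℤ := (m : ℤ) - s with hX
  set t : ℤ := ((m : ℤ) + u) / b with ht
  have hXt : X = -u + b * t := by
    have h := Int.mul_ediv_add_emod ((m : ℤ) + u) b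
    rw [hX, hs]
    rw [ht]
    linarith [h]
  set Y : ℤ := v + a * t with hY
  have hkey : b * Y - a * X = 1 := by
    rw [hY, hXt]; ring_nf; linarith [huv]
  have hXm : X ≤ (m : ℤ) := by omega
  have hXd : d ≤ X := by omega
  have hX1 : 0 < X := lt_of_lt_of_le hd hXd
  -- the rational Y/X
  set r : ℚ := (Y : ℚ) / (X : ℚ) with hr
  have hcoYX : Nat.Coprime Y.natAbs X.natAbs := by
    have : IsCoprime Y X := ⟨b, -a, by linarith⟩
    simpa [Int.gcd] using Int.isCoprime_iff_gcd_eq_one.mp this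
  have hrnum : r.num = Y := Rat.num_div_eq_of_coprime hX1 hcoYX
  have hrden : (r.den : ℤ) = X := Rat.den_div_eq_of_coprime hX1 hcoYX
  have hpr : p < r := by
    rw [rat_lt_iff', hrden, hrnum]
    linarith [hkey]
  have hqr : q ≤ r := by
    by_cases h1 : r ≤ 1
    · have hrG : r ∈ G := by
        rw [hG]
        refine ⟨le_of_lt (lt_of_le_of_lt hp0 hpr), h1, ?_⟩
        have : (r.den : ℤ) ≤ (m : ℤ) := by rw [hrden]; exact hXm
        exact_mod_cast this
      have := hneigh r hrG
      push_neg at this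
      exact this hpr
    · push_neg at h1
      exact le_trans hq1 (le_of_lt h1)
  -- cross multiply q ≤ r
  have hcX : c * X ≤ Y * d := by
    have : ¬ (r < q) := not_lt_of_ge hqr
    rw [rat_lt_iff', hrnum, hrden] at this
    exact not_lt.mp this
  have hk1 : 1 ≤ c * b - a * d := by
    have := (rat_lt_iff' p q).mp hpq
    linarith
  -- determinant identity
  have hid : d = b * (Y * d - c * X) + X * (c * b - a * d) := by
    have : d * (b * Y - a * X) = b * (Y * d - c * X) + X * (c * b - a * d) := by ring
    rw [hkey] at this; linarith
  have h5 : 0 ≤ b * (Y * d - c * X) := mul_nonneg hb.le (by linarith)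
  have h6 : d * (c * b - a * d) ≤ X * (c * b - a * d) :=
    mul_le_mul_of_nonneg_right hXd (by linarith)
  have h7 : d * (c * b - a * d) ≤ d := by linarith [hid]
  have h8 : c * b - a * d ≤ 1 := by
    by_contra hcon
    push_neg at hcon
    have h9 : d * 2 ≤ d * (c * b - a * d) :=
      mul_le_mul_of_nonneg_left (by linarith) hd.le
    linarith
  linarith

theorem farey_mediant_insert (n : ℕ) (hn : 2 ≤ n) (F G : Finset ℚ)
    (hF : ∀ q : ℚ, q ∈ F ↔ 0 ≤ q ∧ q ≤ 1 ∧ q.den ≤ n)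
    (hG : ∀ q : ℚ, q ∈ G ↔ 0 ≤ q ∧ q ≤ 1 ∧ q.den ≤ n - 1)
    (p q : ℚ) (hp : p ∈ G) (hq : q ∈ G) (hpq : p < q)
    (hneigh : ∀ r ∈ G, ¬(p < r ∧ r < q))
    (hden : p.den + q.den = n) :
    Int.gcd (p.num + q.num) ((p.den : ℤ) + (q.den : ℤ)) = 1 ∧
    ((p.num + q.num : ℚ)) / ((p.den : ℚ) + (q.den : ℚ)) ∈ F ∧
    p < ((p.num + q.num : ℚ)) / ((p.den : ℚ) + (q.den : ℚ)) ∧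
    ((p.num + q.num : ℚ)) / ((p.den : ℚ) + (q.den : ℚ)) < q ∧
    (∀ r ∈ F, ¬(p < r ∧ r < ((p.num + q.num : ℚ)) / ((p.den : ℚ) + (q.den : ℚ)))) ∧
    (∀ r ∈ F, ¬(((p.num + q.num : ℚ)) / ((p.den : ℚ) + (q.den : ℚ)) < r ∧ r < q)) := by
  have hdet := farey_det n hn G hG p q hp hq hpq hneigh hden
  obtain ⟨hp0, hp1, hpd⟩ := (hG p).mp hp
  obtain ⟨hq0, hq1, hqd⟩ := (hG q).mp hq
  set a := p.num with ha
  set c := q.num with hc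
  set b := (p.den : ℤ) with hb'
  set d := (q.den : ℤ) with hd'
  have hb : 0 < b := by rw [hb']; exact_mod_cast p.den_pos
  have hd : 0 < d := by rw [hd']; exact_mod_cast q.den_pos
  have hB : 0 < b + d := by linarith
  have hbdn : b + d = (n : ℤ) := by rw [hb', hd']; exact_mod_cast hden
  -- gcd
  have hgcd : Int.gcd (a + c) (b + d) = 1 := by
    have hdvd : (Int.gcd (a + c) (b + d) : ℤ) ∣ 1 := by
      have h1 : (Int.gcd (a + c) (b + d) : ℤ) ∣ (a + c) := Int.gcd_dvd_left _ _
      have h2 : (Int.gcd (a + c) (b + d) : ℤ) ∣ (b + d) := Int.gcd_dvd_right _ _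
      have : c * (b + d) - d * (a + c) = 1 := by linarith [hdet]; 
      calc (Int.gcd (a + c) (b + d) : ℤ) ∣ c * (b + d) - d * (a + c) :=
            dvd_sub (Dvd.dvd.mul_left h2 c) (Dvd.dvd.mul_left h1 d)
        _ = 1 := this
    have := Int.eq_one_of_dvd_one (Int.natCast_nonneg _) hdvd
    exact_mod_cast this
  -- the mediant
  have hMeq : ((p.num + q.num : ℚ)) / ((p.den : ℚ) + (q.den : ℚ))
      = ((a + c : ℤ) : ℚ) / (((b + d : ℤ)) : ℚ) := by
    rw [hb', hd']; push_cast; ring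
  set M : ℚ := ((a + c : ℤ) : ℚ) / (((b + d : ℤ)) : ℚ) with hM
  rw [hMeq]
  have hcop : Nat.Coprime (a + c).natAbs (b + d).natAbs := by
    simpa [Int.gcd] using hgcd
  have hMnum : M.num = a + c := Rat.num_div_eq_of_coprime hB hcop
  have hMden : (M.den : ℤ) = b + d := Rat.den_div_eq_of_coprime hB hcop
  have hpM : p < M := by
    rw [rat_lt_iff', hMden, hMnum]
    linarith [hdet]
  have hMq : M < q := by
    rw [rat_lt_iff', hMnum, hMden]
    linarith [hdet]
  have hMF : M ∈ F := by
    rw [hF]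
    refine ⟨le_of_lt (lt_of_le_of_lt hp0 hpM), le_of_lt (lt_of_lt_of_le hMq hq1), ?_⟩
    have : (M.den : ℤ) ≤ (n : ℤ) := by rw [hMden]; omega
    exact_mod_cast this
  refine ⟨hgcd, hMF, hpM, hMq, ?_, ?_⟩
  · rintro r hrF ⟨hpr, hrM⟩
    obtain ⟨hr0, hr1, hrd⟩ := (hF r).mp hrF
    set e := r.num with he
    set f := (r.den : ℤ) with hf'
    have hf : 0 < f := by rw [hf']; exact_mod_cast r.den_pos
    have hfn : f ≤ b + d := by rw [hbdn, hf']; exact_mod_cast hrd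
    have h1 : a * f + 1 ≤ e * b := by
      have := (rat_lt_iff' p r).mp hpr; linarith
    have h2 : e * (b + d) + 1 ≤ (a + c) * f := by
      have := (rat_lt_iff' r M).mp hrM
      rw [hMnum, hMden] at this; linarith
    have H1 : (a * f + 1) * (b + d) ≤ e * b * (b + d) :=
      mul_le_mul_of_nonneg_right h1 hB.le
    have H2 : (e * (b + d) + 1) * b ≤ (a + c) * f * b :=
      mul_le_mul_of_nonneg_right h2 hb.le
    have H3 : c * f * b - a * f * d = f := by
      have : c * f * b - a * f * d = f * (c * b - a * d) := by ring
      rw [this, hdet, mul_one]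
    linarith [H1, H2, H3, hfn, hb, hd, hf]
  · rintro r hrF ⟨hMr, hrq⟩
    obtain ⟨hr0, hr1, hrd⟩ := (hF r).mp hrF
    set e := r.num with he
    set f := (r.den : ℤ) with hf'
    have hf : 0 < f := by rw [hf']; exact_mod_cast r.den_pos
    have hfn : f ≤ b + d := by rw [hbdn, hf']; exact_mod_cast hrd
    have h1 : (a + c) * f + 1 ≤ e * (b + d) := by
      have := (rat_lt_iff' M r).mp hMr
      rw [hMnum, hMden] at this; linarith
    have h2 : e * d + 1 ≤ c * f := by
      have := (rat_lt_iff' r q).mp hrq; linarith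
    have H1 : ((a + c) * f + 1) * d ≤ e * (b + d) * d :=
      mul_le_mul_of_nonneg_right h1 hd.le
    have H2 : (e * d + 1) * (b + d) ≤ c * f * (b + d) :=
      mul_le_mul_of_nonneg_right h2 hB.le
    have H3 : c * f * b - a * f * d = f := by
      have : c * f * b - a * f * d = f * (c * b - a * d) := by ring
      rw [this, hdet, mul_one]
    linarith [H1, H2, H3, hfn, hb, hd, hf]
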